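/- Let a ∈ ℝ, 1 < p < ∞ and 1 ≤ q, r ≤ ∞, and let p', q', r' denote the conjugate exponents of p, q, r (1/p + 1/p' = 1, etc.). Then for all measurable functions f and g on Ω, ∫_Ω |f·g| dμ ≤ ‖f‖_{HL^{a,r}_{p,q}} · ‖g‖_{HL^{-a,r'}_{p',q'}}. -/

import Mathlib

open MeasureTheory ENNReal Set Filter Topology

noncomputable section

variable {X : Type*}

/-- The decreasing rearrangement `f*` of `f` with respect to `μ` :
`f*(s) = inf {α ≥ 0 : μ({x : |f(x)| > α}) ≤ s}`. -/
def rearr [MeasurableSpace X] (μ : Measure X) (f : X → ℝ) (s : ℝ) : ℝ≥0∞ :=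
  sInf {α : ℝ≥0∞ | μ {x | α < ENNReal.ofReal |f x|} ≤ ENNReal.ofReal s}

/-- The averaged (maximal) rearrangement `f**(s) = (1/s)∫_0^s f*(t) dt`. -/
def rearrStar [MeasurableSpace X] (μ : Measure X) (f : X → ℝ) (s : ℝ) : ℝ≥0∞ :=
  (ENNReal.ofReal s)⁻¹ * ∫⁻ t in Set.Ioc (0 : ℝ) s, rearr μ f t

/-- The Lorentz functional built from a rearrangement-type function `R`:
`(∫_0^∞ (t^{1/p} R(t))^r dt/t)^{1/r}` for `r < ∞`, and `sup_{t>0} t^{1/p} R(t)`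
for `r = ∞` (when `p = ∞`, `1/p` is interpreted as `0`, which for `R = f*`
recovers the essential supremum of `|f|`). -/
def lorentzNormOf (R : ℝ → ℝ≥0∞) (p r : ℝ≥0∞) : ℝ≥0∞ :=
  if r = ∞ then ⨆ t : {t : ℝ // 0 < t}, ENNReal.ofReal (t.1 ^ p.toReal⁻¹) * R t.1
  else (∫⁻ t in Set.Ioi (0 : ℝ),
      (ENNReal.ofReal (t ^ p.toReal⁻¹) * R t) ^ r.toReal / ENNReal.ofReal t) ^ r.toReal⁻¹

/-- The Lorentz quasi-norm `‖f‖_{L^{p,r}}`. -/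
def lorentzNorm [MeasurableSpace X] (μ : Measure X) (p r : ℝ≥0∞) (f : X → ℝ) : ℝ≥0∞ :=
  lorentzNormOf (rearr μ f) p r

/-- The Lorentz norm `‖f‖*_{L^{p,r}}`, with `f*` replaced by `f**`. -/
def lorentzNormStar [MeasurableSpace X] (μ : Measure X) (p r : ℝ≥0∞) (f : X → ℝ) : ℝ≥0∞ :=
  lorentzNormOf (rearrStar μ f) p r

/-- The annuli `A_u`, `u ≥ -1`:  `A_{-1} = {x ∈ Ω : |x| < 1/2}` and, for `u ≥ 0`,
`A_u = {x ∈ Ω : 2^{u-1} ≤ |x| < 2^u}`. -/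
def annulus [Norm X] (Ω : Set X) (u : ℤ) : Set X :=
  if u = -1 then {x ∈ Ω | ‖x‖ < 1 / 2}
  else {x ∈ Ω | (2 : ℝ) ^ (u - 1) ≤ ‖x‖ ∧ ‖x‖ < (2 : ℝ) ^ u}

/-- The Herz-type functional built from a functional `L` on the blocks:
`(Σ_{u ≥ -1} (2^{ua} L(f χ_{A_u}))^q)^{1/q}` for `q < ∞`, with the sup-modification
for `q = ∞`. -/
def herzNormWith {E : Type*} [Norm X] [Zero E] (Ω : Set X) (a : ℝ) (q : ℝ≥0∞)
    (L : (X → E) → ℝ≥0∞) (f : X → E) : ℝ≥0∞ :=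
  if q = ∞ then
    ⨆ u : {u : ℤ // -1 ≤ u},
      ENNReal.ofReal ((2 : ℝ) ^ ((u.1 : ℝ) * a)) * L ((annulus Ω u.1).indicator f)
  else (∑' u : {u : ℤ // -1 ≤ u},
      (ENNReal.ofReal ((2 : ℝ) ^ ((u.1 : ℝ) * a)) * L ((annulus Ω u.1).indicator f)) ^ q.toReal)
      ^ q.toReal⁻¹

/-- The non-homogeneous Lorentz–Herz quasi-norm `‖f‖_{HL^{a,r}_{p,q}}`. -/
def herzNorm [MeasurableSpace X] [Norm X] (μ : Measure X) (Ω : Set X) (a : ℝ)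
    (p q r : ℝ≥0∞) (f : X → ℝ) : ℝ≥0∞ :=
  herzNormWith Ω a q (lorentzNorm μ p r) f

/-- The non-homogeneous Lorentz–Herz norm `‖f‖*_{HL^{a,r}_{p,q}}`, built from the
Lorentz norms `‖·‖*_{L^{p,r}}`. -/
def herzNormStar [MeasurableSpace X] [Norm X] (μ : Measure X) (Ω : Set X) (a : ℝ)
    (p q r : ℝ≥0∞) (f : X → ℝ) : ℝ≥0∞ :=
  herzNormWith Ω a q (lorentzNormStar μ p r) f

/-- The conjugate exponent: `1/p + 1/p' = 1`, with `1' = ∞` and `∞' = 1`. -/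
def conjExp (p : ℝ≥0∞) : ℝ≥0∞ :=
  if p = 1 then ∞ else if p = ∞ then 1 else ENNReal.ofReal (p.toReal / (p.toReal - 1))

/-- The quantity `(Σ_{u≥-1} (2^{ua} μ(A_u ∩ E)^{1/p})^q)^{(of the summands)}`,
i.e. `Σ_{u≥-1} 2^{uaq} μ(A_u ∩ E)^{q/p}` for `q < ∞`, with the sup-modification
for `q = ∞`. -/
def herzSetNorm [MeasurableSpace X] [Norm X] (μ : Measure X) (Ω : Set X) (a : ℝ)
    (p q : ℝ≥0∞) (E : Set X) : ℝ≥0∞ :=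
  if q = ∞ then
    ⨆ u : {u : ℤ // -1 ≤ u},
      ENNReal.ofReal ((2 : ℝ) ^ ((u.1 : ℝ) * a)) * μ (annulus Ω u.1 ∩ E) ^ p.toReal⁻¹
  else ∑' u : {u : ℤ // -1 ≤ u},
      (ENNReal.ofReal ((2 : ℝ) ^ ((u.1 : ℝ) * a)) * μ (annulus Ω u.1 ∩ E) ^ p.toReal⁻¹) ^ q.toReal

/-- The Peetre K-functional for the couple of quasi-normed function spaces
determined by the functionals `n₀`, `n₁`. -/
def Kfun [MeasurableSpace X] (n₀ n₁ : (X → ℝ) → ℝ≥0∞) (t : ℝ) (f : X → ℝ) : ℝ≥0∞ :=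
  ⨅ (g : X → ℝ) (_ : Measurable g) (_ : Measurable (f - g)),
    n₀ g + ENNReal.ofReal t * n₁ (f - g)

/-- The real interpolation quasi-norm `‖f‖_{(X₀,X₁)_{θ,q}}`. -/
def interpNorm [MeasurableSpace X] (n₀ n₁ : (X → ℝ) → ℝ≥0∞) (θ : ℝ) (q : ℝ≥0∞)
    (f : X → ℝ) : ℝ≥0∞ :=
  if q = ∞ then ⨆ t : {t : ℝ // 0 < t}, ENNReal.ofReal (t.1 ^ (-θ)) * Kfun n₀ n₁ t.1 f
  else (∫⁻ t in Set.Ioi (0 : ℝ),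
      (ENNReal.ofReal (t ^ (-θ)) * Kfun n₀ n₁ t f) ^ q.toReal / ENNReal.ofReal t) ^ q.toReal⁻¹

/-- Membership in the sum `X₀ + X₁` of the couple determined by `n₀`, `n₁`. -/
def inSum [MeasurableSpace X] (n₀ n₁ : (X → ℝ) → ℝ≥0∞) (f : X → ℝ) : Prop :=
  ∃ g : X → ℝ, Measurable g ∧ Measurable (f - g) ∧ n₀ g < ∞ ∧ n₁ (f - g) < ∞

end

section Helpers
open MeasureTheory ENNReal Set
noncomputable section
variable {X : Type*}

def distf [MeasurableSpace X] (μ : Measure X) (f : X → ℝ) (α : ℝ≥0∞) : ℝ≥0∞ :=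
  μ {x | α < ENNReal.ofReal |f x|}

variable [MeasurableSpace X] {μ : Measure X} {f : X → ℝ}

lemma distf_antitone : Antitone (distf μ f) := fun a b hab =>
  measure_mono (fun x hx => lt_of_le_of_lt hab hx)

lemma rearr_antitone : Antitone (rearr μ f) := fun s t hst =>
  sInf_le_sInf (fun α hα => le_trans hα (ENNReal.ofReal_le_ofReal hst))

lemma rearr_measurable : Measurable (rearr μ f) := rearr_antitone.measurable

lemma rearr_le_iff {t : ℝ} {α : ℝ≥0∞} :
    rearr μ f t ≤ α ↔ distf μ f α ≤ ENNReal.ofReal t := by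
  constructor
  · intro h
    have key : ∀ β, α < β → distf μ f β ≤ ENNReal.ofReal t := by
      intro β hβ
      obtain ⟨γ, hγ, hγβ⟩ := sInf_lt_iff.mp (lt_of_le_of_lt h hβ)
      exact le_trans (distf_antitone hγβ.le) hγ
    rcases eq_or_ne α ∞ with rfl | hα
    · have : distf μ f ∞ = 0 := by
        have : {x | (∞:ℝ≥0∞) < ENNReal.ofReal |f x|} = ∅ := by
          ext x; simp [not_top_lt]
        simp [distf, this]
      simp [this]
    · have hcover : {x | α < ENNReal.ofReal |f x|}
          = ⋃ n : ℕ, {x | α + (n:ℝ≥0∞)⁻¹ < ENNReal.ofReal |f x|} := by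
        ext x
        simp only [mem_setOf_eq, mem_iUnion]
        constructor
        · intro hx
          obtain ⟨β, hβ1, hβ2⟩ := exists_between hx
          have hne : β - α ≠ 0 := fun h => by
            have := tsub_pos_of_lt hβ1; rw [h] at this; exact lt_irrefl _ this
          obtain ⟨n, hn⟩ := ENNReal.exists_inv_nat_lt hne
          refine ⟨n, lt_trans ?_ hβ2⟩
          calc α + (n:ℝ≥0∞)⁻¹ < α + (β - α) :=
                ENNReal.add_lt_add_left hα hn
            _ = β := add_tsub_cancel_of_le hβ1.le
        · rintro ⟨n, hn⟩
          exact lt_of_le_of_lt le_self_add hn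
      have hdir : Directed (fun x1 x2 : Set X => x1 ⊆ x2)
          (fun n : ℕ => {x | α + (n:ℝ≥0∞)⁻¹ < ENNReal.ofReal |f x|}) := by
        intro m n
        refine ⟨max m n, fun x hx => lt_of_le_of_lt (add_le_add_right
            (ENNReal.inv_le_inv.mpr (by exact_mod_cast Nat.le_max_left m n)) α) hx,
          fun x hx => lt_of_le_of_lt (add_le_add_right
            (ENNReal.inv_le_inv.mpr (by exact_mod_cast Nat.le_max_right m n)) α) hx⟩
      have : distf μ f α = ⨆ n : ℕ, distf μ f (α + (n:ℝ≥0∞)⁻¹) := by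
        rw [distf, hcover, hdir.measure_iUnion]; rfl
      rw [this]
      exact iSup_le fun n => key _ (ENNReal.lt_add_right hα (by simp))
  · intro h
    exact sInf_le h

lemma lt_rearr_iff {t : ℝ} {α : ℝ≥0∞} :
    α < rearr μ f t ↔ ENNReal.ofReal t < distf μ f α := by
  rw [← not_le, ← not_le, rearr_le_iff]

end
noncomputable section

lemma vol_band (c : ℝ≥0∞) : volume {s : ℝ | 0 < s ∧ ENNReal.ofReal s < c} = c := by
  rcases eq_or_ne c ∞ with rfl | hc
  · have : {s : ℝ | 0 < s ∧ ENNReal.ofReal s < ∞} = Ioi 0 := by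
      ext s; simp [ENNReal.ofReal_lt_top, Set.mem_Ioi]
    rw [this, Real.volume_Ioi]
  · have : {s : ℝ | 0 < s ∧ ENNReal.ofReal s < c} = Ioo 0 c.toReal := by
      ext s
      simp only [mem_setOf_eq, mem_Ioo, and_congr_right_iff]
      intro hs
      exact ENNReal.ofReal_lt_iff_lt_toReal hs.le hc
    rw [this, Real.volume_Ioo, sub_zero, ENNReal.ofReal_toReal hc]

lemma layercake {α : Type*} [MeasurableSpace α] (ν : Measure α) [SFinite ν]
    (F : α → ℝ≥0∞) (hF : Measurable F) :
    ∫⁻ x, F x ∂ν = ∫⁻ s in Set.Ioi (0:ℝ), ν {x | ENNReal.ofReal s < F x} := by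
  have hmS : MeasurableSet {p : α × ℝ | ENNReal.ofReal p.2 < F p.1} :=
    measurableSet_lt (ENNReal.measurable_ofReal.comp measurable_snd) (hF.comp measurable_fst)
  have swap := lintegral_lintegral_swap (μ := ν) (ν := volume.restrict (Set.Ioi (0:ℝ)))
    (f := fun x s => Set.indicator {p : α × ℝ | ENNReal.ofReal p.2 < F p.1} 1 (x, s))
    ((measurable_one.indicator hmS).aemeasurable)
  have lhs : ∀ x, (∫⁻ s in Set.Ioi (0:ℝ),
      Set.indicator {p : α × ℝ | ENNReal.ofReal p.2 < F p.1} 1 (x, s)) = F x := by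
    intro x
    have h1 : (fun s : ℝ => Set.indicator {p : α × ℝ | ENNReal.ofReal p.2 < F p.1} (1 : α × ℝ → ℝ≥0∞) (x, s))
        = Set.indicator {s : ℝ | ENNReal.ofReal s < F x} 1 := by
      ext s
      by_cases h : ENNReal.ofReal s < F x <;>
        simp [Set.indicator, h]
    rw [h1, lintegral_indicator (measurableSet_lt ENNReal.measurable_ofReal measurable_const) _]
    simp_rw [Pi.one_apply]
    rw [Measure.restrict_restrict (measurableSet_lt ENNReal.measurable_ofReal measurable_const),
      setLIntegral_one]
    have h2 : {a : ℝ | ENNReal.ofReal a < F x} ∩ Ioi 0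
        = {s : ℝ | 0 < s ∧ ENNReal.ofReal s < F x} := by
      ext a
      simp only [Set.mem_inter_iff, Set.mem_setOf_eq, Set.mem_Ioi]
      tauto
    rw [h2, vol_band]
  have rhs : ∀ s : ℝ, (∫⁻ x, Set.indicator {p : α × ℝ | ENNReal.ofReal p.2 < F p.1} 1 (x, s) ∂ν)
      = ν {x | ENNReal.ofReal s < F x} := by
    intro s
    have h1 : (fun x => Set.indicator {p : α × ℝ | ENNReal.ofReal p.2 < F p.1} (1 : α × ℝ → ℝ≥0∞) (x, s))
        = Set.indicator {x : α | ENNReal.ofReal s < F x} 1 := by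
      ext x
      by_cases h : ENNReal.ofReal s < F x <;> simp [Set.indicator, h]
    rw [h1, lintegral_indicator (measurableSet_lt measurable_const hF) _]
    simp_rw [Pi.one_apply]
    rw [setLIntegral_one]
  calc ∫⁻ x, F x ∂ν = ∫⁻ x, (∫⁻ s in Set.Ioi (0:ℝ),
        Set.indicator {p : α × ℝ | ENNReal.ofReal p.2 < F p.1} 1 (x, s)) ∂ν := by
        simp_rw [lhs]
    _ = ∫⁻ s in Set.Ioi (0:ℝ), ∫⁻ x,
        Set.indicator {p : α × ℝ | ENNReal.ofReal p.2 < F p.1} 1 (x, s) ∂ν := swap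
    _ = ∫⁻ s in Set.Ioi (0:ℝ), ν {x | ENNReal.ofReal s < F x} := by simp_rw [rhs]

section HL
variable {X : Type*} [MeasurableSpace X] {μ : Measure X} {f g : X → ℝ}

lemma setlintegral_le_rearr [SFinite μ] (hg : Measurable g) (E : Set X) :
    ∫⁻ x in E, ENNReal.ofReal |g x| ∂μ
      ≤ ∫⁻ t in {t : ℝ | 0 < t ∧ ENNReal.ofReal t < μ E}, rearr μ g t := by
  have hG : Measurable fun x => ENNReal.ofReal |g x| :=
    ENNReal.measurable_ofReal.comp hg.abs
  rw [layercake (μ.restrict E) _ hG, layercake (volume.restrict _) (rearr μ g) rearr_measurable]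
  refine lintegral_mono fun s => ?_
  rw [Measure.restrict_apply (measurableSet_lt measurable_const hG),
    Measure.restrict_apply (measurableSet_lt measurable_const rearr_measurable)]
  have hset : {t : ℝ | ENNReal.ofReal s < rearr μ g t} ∩ {t : ℝ | 0 < t ∧ ENNReal.ofReal t < μ E}
      = {t : ℝ | 0 < t ∧ ENNReal.ofReal t < min (μ E) (distf μ g (ENNReal.ofReal s))} := by
    ext t
    simp only [Set.mem_inter_iff, Set.mem_setOf_eq, lt_rearr_iff, lt_min_iff]
    tauto
  rw [hset, vol_band]
  exact le_min (measure_mono Set.inter_subset_right)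
    (measure_mono Set.inter_subset_left)

lemma hardy_littlewood [SFinite μ] (hf : Measurable f) (hg : Measurable g) :
    ∫⁻ x, ENNReal.ofReal |f x| * ENNReal.ofReal |g x| ∂μ
      ≤ ∫⁻ t in Set.Ioi (0:ℝ), rearr μ f t * rearr μ g t := by
  have hF : Measurable fun x => ENNReal.ofReal |f x| :=
    ENNReal.measurable_ofReal.comp hf.abs
  have hG : Measurable fun x => ENNReal.ofReal |g x| :=
    ENNReal.measurable_ofReal.comp hg.abs
  have h1 : ∫⁻ x, ENNReal.ofReal |f x| * ENNReal.ofReal |g x| ∂μ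
      = ∫⁻ x, ENNReal.ofReal |f x| ∂(μ.withDensity fun x => ENNReal.ofReal |g x|) := by
    rw [lintegral_withDensity_eq_lintegral_mul μ hG hF]
    simp only [Pi.mul_apply, mul_comm]
  have h2 : ∫⁻ t in Set.Ioi (0:ℝ), rearr μ f t * rearr μ g t
      = ∫⁻ t, rearr μ f t ∂((volume.restrict (Set.Ioi (0:ℝ))).withDensity (rearr μ g)) := by
    rw [lintegral_withDensity_eq_lintegral_mul _ rearr_measurable rearr_measurable]
    simp only [Pi.mul_apply, mul_comm]
  rw [h1, h2, layercake _ _ hF, layercake _ _ rearr_measurable]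
  refine lintegral_mono fun s => ?_
  rw [withDensity_apply _ (measurableSet_lt measurable_const hF),
    withDensity_apply _ (measurableSet_lt measurable_const rearr_measurable),
    Measure.restrict_restrict (measurableSet_lt measurable_const rearr_measurable)]
  have hset : {t : ℝ | ENNReal.ofReal s < rearr μ f t} ∩ Set.Ioi 0
      = {t : ℝ | 0 < t ∧ ENNReal.ofReal t < μ {x | ENNReal.ofReal s < ENNReal.ofReal |f x|}} := by
    ext t
    simp only [Set.mem_inter_iff, Set.mem_setOf_eq, Set.mem_Ioi, lt_rearr_iff]
    rw [and_comm]; rfl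
  rw [hset]
  exact setlintegral_le_rearr hg _
end HL
end
end Helpers

section LorentzHolder
open MeasureTheory ENNReal Set
variable {X : Type*} [MeasurableSpace X] {μ : MeasureTheory.Measure X} {f g : X → ℝ}

lemma one_lt_toReal {p : ℝ≥0∞} (hp1 : 1 < p) (hp : p ≠ ∞) : 1 < p.toReal := by
  have := (ENNReal.toReal_lt_toReal (by simp) hp).mpr hp1
  simpa using this

lemma conjExp_eq {p : ℝ≥0∞} (hp1 : 1 < p) (hp : p ≠ ∞) :
    conjExp p = ENNReal.ofReal (p.toReal / (p.toReal - 1)) := by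
  rw [conjExp, if_neg hp1.ne', if_neg hp]

lemma conjExp_isConj {p : ℝ≥0∞} (hp1 : 1 < p) (hp : p ≠ ∞) :
    Real.HolderConjugate p.toReal (conjExp p).toReal := by
  have h1 : 1 < p.toReal := one_lt_toReal hp1 hp
  have hnn : 0 ≤ p.toReal / (p.toReal - 1) :=
    div_nonneg (by linarith) (by linarith)
  rw [conjExp_eq hp1 hp, ENNReal.toReal_ofReal hnn]
  exact (Real.holderConjugate_iff_eq_conjExponent h1).mpr rfl

lemma measurable_phi {c : ℝ} : Measurable fun t : ℝ => ENNReal.ofReal (t ^ c) * rearr μ f t := by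
  have h1 : Measurable fun t : ℝ => t ^ c := by fun_prop
  exact (ENNReal.measurable_ofReal.comp h1).mul rearr_measurable

lemma lorentz_holder [SFinite μ] (hf : Measurable f) (hg : Measurable g)
    {p r : ℝ≥0∞} (hp1 : 1 < p) (hp : p ≠ ∞) (hr : 1 ≤ r) :
    ∫⁻ x, ENNReal.ofReal |f x| * ENNReal.ofReal |g x| ∂μ
      ≤ lorentzNorm μ p r f * lorentzNorm μ (conjExp p) (conjExp r) g := by
  refine le_trans (hardy_littlewood hf hg) ?_
  have hconj := conjExp_isConj hp1 hp
  set a := p.toReal⁻¹ with ha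
  set b := (conjExp p).toReal⁻¹ with hb
  have hab : a + b = 1 := hconj.inv_add_inv_eq_one
  set φ := fun t : ℝ => ENNReal.ofReal (t ^ a) * rearr μ f t with hφ
  set ψ := fun t : ℝ => ENNReal.ofReal (t ^ b) * rearr μ g t with hψ
  have hφm : Measurable φ := measurable_phi
  have hψm : Measurable ψ := measurable_phi
  have hpoint : ∀ t ∈ Ioi (0:ℝ), rearr μ f t * rearr μ g t
      = φ t * ψ t / ENNReal.ofReal t := by
    intro t ht
    have hc0 : ENNReal.ofReal t ≠ 0 := by
      simp [ENNReal.ofReal_eq_zero, not_le, ht.out]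
    have h1 : ENNReal.ofReal (t ^ a) * ENNReal.ofReal (t ^ b) = ENNReal.ofReal t := by
      rw [← ENNReal.ofReal_mul (Real.rpow_nonneg ht.out.le _), ← Real.rpow_add ht.out, hab,
        Real.rpow_one]
    rw [hφ, hψ, mul_mul_mul_comm, h1, div_eq_mul_inv, mul_comm (ENNReal.ofReal t), mul_assoc,
      ENNReal.mul_inv_cancel hc0 ENNReal.ofReal_ne_top, mul_one]
  rw [setLIntegral_congr_fun measurableSet_Ioi hpoint]
  rcases eq_or_ne r ∞ with rfl | hrtop
  · -- r = ∞, conjExp ∞ = 1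
    have hc1 : conjExp ∞ = 1 := by rw [conjExp]; norm_num
    rw [hc1]
    rw [lorentzNorm, lorentzNorm, lorentzNormOf, lorentzNormOf, if_pos rfl,
      if_neg (by norm_num : (1:ℝ≥0∞) ≠ ∞)]
    simp only [ENNReal.toReal_one, inv_one, ENNReal.rpow_one]
    set S := ⨆ t : {t : ℝ // 0 < t}, ENNReal.ofReal (t.1 ^ p.toReal⁻¹) * rearr μ f t.1 with hS
    have hmono : ∀ t ∈ Ioi (0:ℝ), φ t * ψ t / ENNReal.ofReal t
        ≤ S * (ψ t / ENNReal.ofReal t) := by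
      intro t ht
      have hφS : φ t ≤ S := le_iSup (fun u : {t : ℝ // 0 < t} =>
        ENNReal.ofReal (u.1 ^ p.toReal⁻¹) * rearr μ f u.1) ⟨t, ht⟩
      calc φ t * ψ t / ENNReal.ofReal t ≤ S * ψ t / ENNReal.ofReal t :=
            ENNReal.div_le_div (mul_le_mul_left hφS _) le_rfl
        _ = S * (ψ t / ENNReal.ofReal t) := by
            rw [div_eq_mul_inv, div_eq_mul_inv, mul_assoc]
    refine le_trans (setLIntegral_mono (by fun_prop) hmono) ?_
    rw [lintegral_const_mul _ (by fun_prop : Measurable fun t => ψ t / ENNReal.ofReal t)]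
  · rcases eq_or_ne r 1 with rfl | hr1
    · -- r = 1, conjExp 1 = ∞
      have hc1 : conjExp 1 = ∞ := by rw [conjExp]; norm_num
      rw [hc1]
      rw [lorentzNorm, lorentzNorm, lorentzNormOf, lorentzNormOf, if_pos rfl,
        if_neg (by norm_num : (1:ℝ≥0∞) ≠ ∞)]
      simp only [ENNReal.toReal_one, inv_one, ENNReal.rpow_one]
      set S := ⨆ t : {t : ℝ // 0 < t}, ENNReal.ofReal (t.1 ^ (conjExp p).toReal⁻¹) * rearr μ g t.1 with hS
      have hmono : ∀ t ∈ Ioi (0:ℝ), φ t * ψ t / ENNReal.ofReal t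
          ≤ (φ t / ENNReal.ofReal t) * S := by
        intro t ht
        have hψS : ψ t ≤ S := le_iSup (fun u : {t : ℝ // 0 < t} =>
          ENNReal.ofReal (u.1 ^ (conjExp p).toReal⁻¹) * rearr μ g u.1) ⟨t, ht⟩
        calc φ t * ψ t / ENNReal.ofReal t ≤ φ t * S / ENNReal.ofReal t :=
              ENNReal.div_le_div (mul_le_mul_right hψS _) le_rfl
          _ = (φ t / ENNReal.ofReal t) * S := by
              rw [div_eq_mul_inv, div_eq_mul_inv, mul_right_comm]
      refine le_trans (setLIntegral_mono (by fun_prop) hmono) ?_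
      rw [lintegral_mul_const _ (by fun_prop : Measurable fun t => φ t / ENNReal.ofReal t)]
    · -- 1 < r < ∞
      have hr1' : 1 < r := lt_of_le_of_ne hr (Ne.symm hr1)
      have hrconj := conjExp_isConj hr1' hrtop
      have hrte : 1 < r.toReal := one_lt_toReal hr1' hrtop
      have hsstop : conjExp r ≠ ∞ := by
        rw [conjExp_eq hr1' hrtop]; exact ENNReal.ofReal_ne_top
      set rr := r.toReal with hrr
      set ss := (conjExp r).toReal with hss
      set u := fun t : ℝ => φ t * (ENNReal.ofReal t) ^ (-(rr⁻¹)) with hu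
      set v := fun t : ℝ => ψ t * (ENNReal.ofReal t) ^ (-(ss⁻¹)) with hv
      have hum : Measurable u := by fun_prop
      have hvm : Measurable v := by fun_prop
      have huv : ∀ t ∈ Ioi (0:ℝ), φ t * ψ t / ENNReal.ofReal t = (u * v) t := by
        intro t ht
        have hc0 : ENNReal.ofReal t ≠ 0 := by
          simp [ENNReal.ofReal_eq_zero, not_le, ht.out]
        have : (ENNReal.ofReal t) ^ (-(rr⁻¹)) * (ENNReal.ofReal t) ^ (-(ss⁻¹))
            = (ENNReal.ofReal t)⁻¹ := by
          rw [← ENNReal.rpow_add _ _ hc0 ENNReal.ofReal_ne_top]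
          rw [show -(rr⁻¹) + -(ss⁻¹) = (-1 : ℝ) by
            have := hrconj.inv_add_inv_eq_one; linarith]
          exact ENNReal.rpow_neg_one _
        simp only [hu, hv, Pi.mul_apply]
        rw [mul_mul_mul_comm (φ t) (ENNReal.ofReal t ^ (-(rr⁻¹))) (ψ t)
          (ENNReal.ofReal t ^ (-(ss⁻¹))), this, div_eq_mul_inv]
      rw [setLIntegral_congr_fun measurableSet_Ioi huv]
      refine le_trans (ENNReal.lintegral_mul_le_Lp_mul_Lq (volume.restrict (Ioi 0)) hrconj
        hum.aemeasurable hvm.aemeasurable) ?_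
      rw [lorentzNorm, lorentzNorm, lorentzNormOf, lorentzNormOf, if_neg hrtop, if_neg hsstop]
      have hpow : ∀ (w : ℝ → ℝ≥0∞) (e : ℝ), 0 < e → ∀ t ∈ Ioi (0:ℝ),
          (w t * (ENNReal.ofReal t) ^ (-(e⁻¹))) ^ e = w t ^ e / ENNReal.ofReal t := by
        intro w e he t _
        rw [ENNReal.mul_rpow_of_nonneg _ _ he.le, ← ENNReal.rpow_mul,
          show -e⁻¹ * e = (-1:ℝ) by field_simp, ENNReal.rpow_neg_one, div_eq_mul_inv]
      have hss1 : 1 < ss := hrconj.symm.lt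
      refine mul_le_mul' (le_of_eq ?_) (le_of_eq ?_)
      · rw [one_div]
        congr 1
        exact setLIntegral_congr_fun measurableSet_Ioi
          (hpow φ rr (by linarith))
      · rw [one_div]
        congr 1
        exact setLIntegral_congr_fun measurableSet_Ioi
          (hpow ψ ss (by linarith))
end LorentzHolder

abbrev Euc (N : ℕ) : Type := EuclideanSpace ℝ (Fin N)

section HerzHelpers
open MeasureTheory ENNReal Set

lemma annulus_measurable {N : ℕ} (Ω : Set (Euc N)) (hΩ : MeasurableSet Ω) (u : ℤ) :
    MeasurableSet (annulus Ω u) := by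
  have hnorm : Measurable fun x : Euc N => ‖x‖ := continuous_norm.measurable
  rw [annulus]
  split_ifs
  · exact hΩ.inter (measurableSet_lt hnorm measurable_const)
  · exact hΩ.inter ((measurableSet_le measurable_const hnorm).inter
      (measurableSet_lt hnorm measurable_const))

lemma annulus_subset {N : ℕ} (Ω : Set (Euc N)) (u : ℤ) : annulus Ω u ⊆ Ω := by
  rw [annulus]; split_ifs <;> exact fun x hx => hx.1

lemma annulus_norm_lt {N : ℕ} {Ω : Set (Euc N)} {u : ℤ} (hu : u ≠ -1) {x : Euc N}
    (hx : x ∈ annulus Ω u) : (2:ℝ) ^ (u-1) ≤ ‖x‖ ∧ ‖x‖ < (2:ℝ) ^ u := by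
  rw [annulus, if_neg hu] at hx; exact hx.2

lemma annulus_cover {N : ℕ} (Ω : Set (Euc N)) :
    ⋃ u : {u : ℤ // -1 ≤ u}, annulus Ω u.1 = Ω := by
  apply Set.Subset.antisymm
  · exact Set.iUnion_subset fun u => annulus_subset Ω u.1
  · intro x hx
    rcases lt_or_ge ‖x‖ (1/2 : ℝ) with h | h
    · refine Set.mem_iUnion.mpr ⟨⟨-1, le_refl _⟩, ?_⟩
      rw [annulus, if_pos rfl]
      exact ⟨hx, h⟩
    · have hx0 : (0:ℝ) < ‖x‖ := lt_of_lt_of_le (by norm_num) h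
      obtain ⟨n, hn1, hn2⟩ := exists_mem_Ico_zpow (x := ‖x‖) (y := (2:ℝ)) hx0 one_lt_two
      have hne : n + 1 ≠ -1 := by
        intro hcontra
        have h1 : ((2:ℝ) ^ (-1 : ℤ)) ≤ ‖x‖ := by norm_num; linarith
        have := lt_of_le_of_lt h1 hn2
        rw [hcontra] at this
        exact lt_irrefl _ this
      have hge : -1 ≤ n + 1 := by
        by_contra hc
        push_neg at hc
        have : n + 1 ≤ -1 := by omega
        have h2 : ((2:ℝ) ^ (n+1) : ℝ) ≤ (2:ℝ) ^ (-1 : ℤ) :=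
          zpow_le_zpow_right₀ one_le_two this
        have h3 : ‖x‖ < (2:ℝ)^(-1:ℤ) := lt_of_lt_of_le hn2 h2
        norm_num at h3
        linarith
      refine Set.mem_iUnion.mpr ⟨⟨n+1, hge⟩, ?_⟩
      rw [annulus, if_neg hne]
      refine ⟨hx, ?_, ?_⟩
      · rw [show n + 1 - 1 = n by ring]; exact hn1
      · exact hn2

lemma annulus_disjoint {N : ℕ} (Ω : Set (Euc N)) :
    Pairwise (Function.onFun Disjoint fun u : {u : ℤ // -1 ≤ u} => annulus Ω u.1) := by
  intro u v huv
  rw [Function.onFun]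
  rw [Set.disjoint_left]
  intro x hxu hxv
  apply huv
  have key : ∀ w₁ w₂ : {u : ℤ // -1 ≤ u}, w₁.1 < w₂.1 →
      x ∈ annulus Ω w₁.1 → x ∈ annulus Ω w₂.1 → False := by
    intro w₁ w₂ hlt h1 h2
    have hw2ne : w₂.1 ≠ -1 := by
      have := w₁.2; omega
    obtain ⟨h2a, _⟩ := annulus_norm_lt hw2ne h2
    rcases eq_or_ne w₁.1 (-1) with hw1 | hw1
    · rw [annulus, hw1, if_pos rfl] at h1
      have : (2:ℝ) ^ (-1 : ℤ) ≤ (2:ℝ) ^ (w₂.1 - 1) :=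
        zpow_le_zpow_right₀ one_le_two (by omega)
      norm_num at this
      linarith [h1.2, le_trans this h2a]
    · obtain ⟨_, h1b⟩ := annulus_norm_lt hw1 h1
      have : (2:ℝ) ^ w₁.1 ≤ (2:ℝ) ^ (w₂.1 - 1) :=
        zpow_le_zpow_right₀ one_le_two (by omega)
      linarith [le_trans this h2a]
  rcases lt_trichotomy u.1 v.1 with h | h | h
  · exact absurd (key u v h hxu hxv) not_false
  · exact Subtype.ext h
  · exact absurd (key v u h hxv hxu) not_false

lemma tsum_holder {ι : Type*} [Countable ι] [MeasurableSpace ι] [MeasurableSingletonClass ι]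
    (A B : ι → ℝ≥0∞) {q : ℝ≥0∞} (hq1 : 1 < q) (hqtop : q ≠ ∞) :
    ∑' u, A u * B u ≤ (∑' u, A u ^ q.toReal) ^ q.toReal⁻¹
      * (∑' u, B u ^ (conjExp q).toReal) ^ (conjExp q).toReal⁻¹ := by
  rw [← MeasureTheory.lintegral_count (fun u => A u * B u),
    ← MeasureTheory.lintegral_count (fun u => A u ^ q.toReal),
    ← MeasureTheory.lintegral_count (fun u => B u ^ (conjExp q).toReal)]
  have := ENNReal.lintegral_mul_le_Lp_mul_Lq (Measure.count (α := ι)) (conjExp_isConj hq1 hqtop)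
    (measurable_of_countable A).aemeasurable (measurable_of_countable B).aemeasurable
  simpa [one_div] using this

end HerzHelpers

/-- (Hölder inequality for Lorentz–Herz spaces.) For `a ∈ ℝ`,
`1 < p < ∞`, `1 ≤ q, r ≤ ∞` and conjugate exponents `p', q', r'`, one has
`∫_Ω |f g| dμ ≤ ‖f‖_{HL^{a,r}_{p,q}} ‖g‖_{HL^{-a,r'}_{p',q'}}` for all measurable
`f`, `g`. -/
theorem lorentzHerz_holder {N : ℕ} (hN : 1 ≤ N)
    (Ω : Set (Euc N)) (hΩ : MeasurableSet Ω)
    (a : ℝ) (p q r : ℝ≥0∞) (hp1 : 1 < p) (hp : p ≠ ∞) (hq : 1 ≤ q) (hr : 1 ≤ r) :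
    ∀ f g : Euc N → ℝ, Measurable f → Measurable g →
      ∫⁻ x in Ω, ENNReal.ofReal |f x * g x| ∂volume
        ≤ herzNorm volume Ω a p q r f
          * herzNorm volume Ω (-a) (conjExp p) (conjExp q) (conjExp r) g := by
  intro f g hf hg
  have hA : ∀ u : ℤ, MeasurableSet (annulus Ω u) := annulus_measurable Ω hΩ
  set L₁ := fun u : {u : ℤ // -1 ≤ u} =>
    lorentzNorm volume p r ((annulus Ω u.1).indicator f) with hL₁
  set L₂ := fun u : {u : ℤ // -1 ≤ u} =>
    lorentzNorm volume (conjExp p) (conjExp r) ((annulus Ω u.1).indicator g) with hL₂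
  set w₁ := fun u : {u : ℤ // -1 ≤ u} =>
    ENNReal.ofReal ((2 : ℝ) ^ ((u.1 : ℝ) * a)) with hw₁
  set w₂ := fun u : {u : ℤ // -1 ≤ u} =>
    ENNReal.ofReal ((2 : ℝ) ^ ((u.1 : ℝ) * (-a))) with hw₂
  have key1 : ∫⁻ x in Ω, ENNReal.ofReal |f x * g x| ∂volume
      ≤ ∑' u : {u : ℤ // -1 ≤ u}, L₁ u * L₂ u := by
    rw [← annulus_cover Ω, lintegral_iUnion (fun u : {u : ℤ // -1 ≤ u} => hA u.1) (annulus_disjoint Ω)]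
    refine ENNReal.tsum_le_tsum fun u => ?_
    have hterm : ∫⁻ x in annulus Ω u.1, ENNReal.ofReal |f x * g x| ∂volume
        = ∫⁻ x, ENNReal.ofReal |(annulus Ω u.1).indicator f x|
            * ENNReal.ofReal |(annulus Ω u.1).indicator g x| ∂volume := by
      rw [← lintegral_indicator (hA u.1)]
      congr 1
      ext x
      by_cases hx : x ∈ annulus Ω u.1
      · rw [Set.indicator_of_mem hx, Set.indicator_of_mem hx, Set.indicator_of_mem hx,
          abs_mul, ENNReal.ofReal_mul (abs_nonneg _)]
      · rw [Set.indicator_of_notMem hx, Set.indicator_of_notMem hx,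
          Set.indicator_of_notMem hx]
        simp
    rw [hterm]
    exact lorentz_holder (hf.indicator (hA u.1)) (hg.indicator (hA u.1)) hp1 hp hr
  refine le_trans key1 ?_
  have hww : ∀ u : {u : ℤ // -1 ≤ u}, w₁ u * w₂ u = 1 := by
    intro u
    rw [hw₁, hw₂, ← ENNReal.ofReal_mul (by positivity), ← Real.rpow_add two_pos,
      show (u.1 : ℝ) * a + (u.1 : ℝ) * (-a) = 0 by ring, Real.rpow_zero, ENNReal.ofReal_one]
  have hsplit : ∀ u : {u : ℤ // -1 ≤ u}, L₁ u * L₂ u = (w₁ u * L₁ u) * (w₂ u * L₂ u) := by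
    intro u
    rw [mul_mul_mul_comm, hww u, one_mul]
  rw [tsum_congr hsplit]
  rw [herzNorm, herzNorm, herzNormWith, herzNormWith]
  rcases eq_or_ne q ∞ with rfl | hqtop
  · have hc1 : conjExp ∞ = 1 := by rw [conjExp]; norm_num
    rw [if_pos rfl, hc1, if_neg (by norm_num : (1:ℝ≥0∞) ≠ ∞)]
    simp only [ENNReal.toReal_one, ENNReal.rpow_one, inv_one]
    set S := ⨆ u : {u : ℤ // -1 ≤ u}, w₁ u * L₁ u with hS
    calc ∑' u : {u : ℤ // -1 ≤ u}, (w₁ u * L₁ u) * (w₂ u * L₂ u)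
        ≤ ∑' u : {u : ℤ // -1 ≤ u}, S * (w₂ u * L₂ u) :=
          ENNReal.tsum_le_tsum fun u => mul_le_mul_left
            (le_iSup (fun v : {u : ℤ // -1 ≤ u} => w₁ v * L₁ v) u) _
      _ = S * ∑' u : {u : ℤ // -1 ≤ u}, w₂ u * L₂ u := ENNReal.tsum_mul_left
  · rcases eq_or_ne q 1 with rfl | hq1
    · have hc1 : conjExp 1 = ∞ := by rw [conjExp]; norm_num
      rw [if_neg hqtop, hc1, if_pos rfl]
      simp only [ENNReal.toReal_one, ENNReal.rpow_one, inv_one]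
      set S := ⨆ u : {u : ℤ // -1 ≤ u}, w₂ u * L₂ u with hS
      calc ∑' u : {u : ℤ // -1 ≤ u}, (w₁ u * L₁ u) * (w₂ u * L₂ u)
          ≤ ∑' u : {u : ℤ // -1 ≤ u}, (w₁ u * L₁ u) * S :=
            ENNReal.tsum_le_tsum fun u => mul_le_mul_right
              (le_iSup (fun v : {u : ℤ // -1 ≤ u} => w₂ v * L₂ v) u) _
        _ = (∑' u : {u : ℤ // -1 ≤ u}, w₁ u * L₁ u) * S := ENNReal.tsum_mul_right
    · have hq1' : 1 < q := lt_of_le_of_ne hq (Ne.symm hq1)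
      have hcq : conjExp q ≠ ∞ := by
        rw [conjExp_eq hq1' hqtop]; exact ENNReal.ofReal_ne_top
      rw [if_neg hqtop, if_neg hcq]
      exact tsum_holder _ _ hq1' hqtop
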